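/- Let E, A be n×n real matrices forming a regular pencil with a Weierstrass decomposition (Q, P, n₁, n₂, W, N), with N^ℓ = 0, and let b, c ∈ ℝⁿ. Split Qb = (α₁, α₂) and Pᵀc = (γ₁, γ₂) with first components in ℝ^{n₁}. Then, over the field K = ℝ(X) of real rational functions, the matrix X·E − A is invertible and cᵀ·(X·E − A)⁻¹·b = γ₁ᵀ·(X·I_{n₁} − W)⁻¹·α₁ − Σ_{i=0}^{ℓ−1} Xⁱ·(γ₂ᵀ·Nⁱ·α₂). -/

import Mathlib

open Matrix Polynomial
set_option synthInstance.maxHeartbeats 1000000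
set_option maxHeartbeats 1000000

/-- The canonical identification of `Fin n` with `Fin n₁ ⊕ Fin n₂` when `n₁ + n₂ = n`. -/
def blockEquiv {n₁ n₂ n : ℕ} (h : n₁ + n₂ = n) : Fin n ≃ (Fin n₁ ⊕ Fin n₂) :=
  (finCongr h.symm).trans finSumFinEquiv.symm

/-- First (slow) component of a vector in `ℝⁿ` under the block identification. -/
def part1 {n₁ n₂ n : ℕ} (h : n₁ + n₂ = n) (v : Fin n → ℝ) : Fin n₁ → ℝ :=
  fun i => v ((blockEquiv h).symm (Sum.inl i))

/-- Second (fast) component of a vector in `ℝⁿ` under the block identification. -/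
def part2 {n₁ n₂ n : ℕ} (h : n₁ + n₂ = n) (v : Fin n → ℝ) : Fin n₂ → ℝ :=
  fun i => v ((blockEquiv h).symm (Sum.inr i))

section AuxLemmas

variable {R : Type*} [CommRing R]

lemma aux_sum_mulVec {m' : Type*} [Fintype m'] (s : Finset ℕ)
    (f : ℕ → Matrix m' m' R) (w : m' → R) :
    (∑ i ∈ s, f i).mulVec w = ∑ i ∈ s, (f i).mulVec w := by
  classical
  induction s using Finset.induction with
  | empty => simp
  | insert _ _ h ih => rw [Finset.sum_insert h, Finset.sum_insert h, Matrix.add_mulVec, ih]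

lemma aux_dot_sum {m' : Type*} [Fintype m'] (v : m' → R) (s : Finset ℕ)
    (f : ℕ → m' → R) :
    v ⬝ᵥ (∑ i ∈ s, f i) = ∑ i ∈ s, v ⬝ᵥ f i := by
  classical
  induction s using Finset.induction with
  | empty => simp
  | insert _ _ h ih => rw [Finset.sum_insert h, Finset.sum_insert h, dotProduct_add, ih]

lemma nilp_right_inv {m' : Type*} [Fintype m'] [DecidableEq m'] (x : R)
    (M : Matrix m' m' R) (ℓ : ℕ) (h : M ^ ℓ = 0) :
    (x • M - 1) * (-(∑ i ∈ Finset.range ℓ, x ^ i • M ^ i)) = 1 := by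
  have key : (x • M - 1) * (∑ i ∈ Finset.range ℓ, x ^ i • M ^ i)
      = ∑ i ∈ Finset.range ℓ, (x ^ (i + 1) • M ^ (i + 1) - x ^ i • M ^ i) := by
    rw [Finset.mul_sum]
    refine Finset.sum_congr rfl fun i _ => ?_
    rw [sub_mul, one_mul, smul_mul_assoc, mul_smul_comm, smul_smul, ← pow_succ',
      ← pow_succ']
  have tel : ∑ i ∈ Finset.range ℓ, (x ^ (i + 1) • M ^ (i + 1) - x ^ i • M ^ i)
      = x ^ ℓ • M ^ ℓ - x ^ 0 • M ^ 0 := Finset.sum_range_sub (fun i => x ^ i • M ^ i) ℓ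
  rw [mul_neg, key, tel, h, smul_zero, pow_zero, pow_zero, one_smul, zero_sub, neg_neg]

end AuxLemmas

/-- Transfer-function identity of Theorem B.1(ii) (delay-free part), over the field
`K = ℝ(X)` of real rational functions. -/
theorem transfer_function_identity
    (n n₁ n₂ : ℕ) (hn : n₁ + n₂ = n)
    (E A Q P : Matrix (Fin n) (Fin n) ℝ)
    (W : Matrix (Fin n₁) (Fin n₁) ℝ) (N : Matrix (Fin n₂) (Fin n₂) ℝ)
    (ℓ : ℕ) (hN : N ^ ℓ = 0)
    (hQ : IsUnit Q) (hP : IsUnit P)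
    (hreg : Matrix.det ((Polynomial.X : Polynomial ℝ) • E.map Polynomial.C
        - A.map Polynomial.C) ≠ 0)
    (hE : Matrix.reindex (blockEquiv hn) (blockEquiv hn) (Q * E * P)
        = Matrix.fromBlocks 1 0 0 N)
    (hA : Matrix.reindex (blockEquiv hn) (blockEquiv hn) (Q * A * P)
        = Matrix.fromBlocks W 0 0 1)
    (b c : Fin n → ℝ)
    (α₁ : Fin n₁ → ℝ) (α₂ : Fin n₂ → ℝ)
    (hα₁ : α₁ = part1 hn (Q.mulVec b)) (hα₂ : α₂ = part2 hn (Q.mulVec b))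
    (γ₁ : Fin n₁ → ℝ) (γ₂ : Fin n₂ → ℝ)
    (hγ₁ : γ₁ = part1 hn (Pᵀ.mulVec c)) (hγ₂ : γ₂ = part2 hn (Pᵀ.mulVec c)) :
    IsUnit ((RatFunc.X : RatFunc ℝ) • E.map (algebraMap ℝ (RatFunc ℝ))
        - A.map (algebraMap ℝ (RatFunc ℝ))) ∧
    (fun i => algebraMap ℝ (RatFunc ℝ) (c i)) ⬝ᵥ
      (((RatFunc.X : RatFunc ℝ) • E.map (algebraMap ℝ (RatFunc ℝ))
        - A.map (algebraMap ℝ (RatFunc ℝ)))⁻¹.mulVec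
          (fun i => algebraMap ℝ (RatFunc ℝ) (b i)))
      = (fun i => algebraMap ℝ (RatFunc ℝ) (γ₁ i)) ⬝ᵥ
          (((RatFunc.X : RatFunc ℝ) • (1 : Matrix (Fin n₁) (Fin n₁) (RatFunc ℝ))
            - W.map (algebraMap ℝ (RatFunc ℝ)))⁻¹.mulVec
              (fun i => algebraMap ℝ (RatFunc ℝ) (α₁ i)))
        - ∑ i ∈ Finset.range ℓ, (RatFunc.X : RatFunc ℝ) ^ i *
            algebraMap ℝ (RatFunc ℝ) (γ₂ ⬝ᵥ (N ^ i).mulVec α₂) := by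
  classical
  set φ := algebraMap ℝ (RatFunc ℝ) with hφ
  set x : RatFunc ℝ := RatFunc.X with hx
  set e := blockEquiv hn with he
  set MK := x • E.map φ - A.map φ with hMKdef
  set WK := W.map φ with hWKdef
  set NK := N.map φ with hNKdef
  set QK := Q.map φ with hQKdef
  set PK := P.map φ with hPKdef
  set B₁ := (x • (1 : Matrix (Fin n₁) (Fin n₁) (RatFunc ℝ)) - WK)⁻¹ with hB₁def
  set B₂ := -(∑ i ∈ Finset.range ℓ, x ^ i • NK ^ i) with hB₂def
  set S : Matrix (Fin n₁ ⊕ Fin n₂) (Fin n₁ ⊕ Fin n₂) (RatFunc ℝ) :=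
    Matrix.fromBlocks (x • 1 - WK) 0 0 (x • NK - 1) with hSdef
  set Sinv : Matrix (Fin n₁ ⊕ Fin n₂) (Fin n₁ ⊕ Fin n₂) (RatFunc ℝ) :=
    Matrix.fromBlocks B₁ 0 0 B₂ with hSinvdef
  -- units
  have hQKu : IsUnit QK := by
    have := hQ.map φ.mapMatrix
    rwa [RingHom.mapMatrix_apply] at this
  have hPKu : IsUnit PK := by
    have := hP.map φ.mapMatrix
    rwa [RingHom.mapMatrix_apply] at this
  have hdQ : IsUnit QK.det := (Matrix.isUnit_iff_isUnit_det _).1 hQKu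
  have hdP : IsUnit PK.det := (Matrix.isUnit_iff_isUnit_det _).1 hPKu
  -- powers of NK
  have hNKpow : ∀ i : ℕ, NK ^ i = (N ^ i).map φ := by
    intro i
    induction i with
    | zero => simp [hNKdef, Matrix.map_one φ (map_zero φ) (map_one φ)]
    | succ k ih => rw [pow_succ, pow_succ, ih, hNKdef, ← Matrix.map_mul]
  have hNKl : NK ^ ℓ = 0 := by
    rw [hNKpow, hN]
    exact Matrix.map_zero φ (map_zero φ)
  have hB₂inv : (x • NK - 1) * B₂ = 1 := nilp_right_inv x NK ℓ hNKl
  -- first block is invertible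
  have hcm : x • (1 : Matrix (Fin n₁) (Fin n₁) (RatFunc ℝ)) - WK
      = (charmatrix W).map (algebraMap (Polynomial ℝ) (RatFunc ℝ)) := by
    ext i j
    by_cases hij : i = j
    · subst hij
      rw [Matrix.map_apply, charmatrix_apply_eq, map_sub, RatFunc.algebraMap_X,
        RatFunc.algebraMap_C]
      simp [hx, hWKdef, hφ, RatFunc.algebraMap_eq_C]
    · rw [Matrix.map_apply, charmatrix_apply_ne _ _ _ hij, map_neg,
        RatFunc.algebraMap_C]
      simp [hWKdef, Matrix.one_apply_ne hij, hφ, RatFunc.algebraMap_eq_C]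
  have hdet1 : IsUnit (x • (1 : Matrix (Fin n₁) (Fin n₁) (RatFunc ℝ)) - WK).det := by
    rw [hcm, ← RingHom.mapMatrix_apply, ← RingHom.map_det, isUnit_iff_ne_zero]
    intro h0
    have : W.charpoly = 0 := by
      apply RatFunc.algebraMap_injective ℝ
      simpa [Matrix.charpoly] using h0
    exact (Matrix.charpoly_monic W).ne_zero this
  have hB₁inv : (x • (1 : Matrix (Fin n₁) (Fin n₁) (RatFunc ℝ)) - WK) * B₁ = 1 :=
    Matrix.mul_nonsing_inv _ hdet1
  -- block decomposition of MK
  have hE' : Q * E * P = (Matrix.fromBlocks 1 0 0 N).submatrix e e := by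
    rw [Matrix.reindex_apply] at hE
    calc Q * E * P = ((Q * E * P).submatrix e.symm e.symm).submatrix e e := by
          simp [Matrix.submatrix_submatrix]
      _ = _ := by rw [hE]
  have hA' : Q * A * P = (Matrix.fromBlocks W 0 0 1).submatrix e e := by
    rw [Matrix.reindex_apply] at hA
    calc Q * A * P = ((Q * A * P).submatrix e.symm e.symm).submatrix e e := by
          simp [Matrix.submatrix_submatrix]
      _ = _ := by rw [hA]
  have key : QK * MK * PK = S.submatrix e e := by
    have h1 : QK * MK * PK = x • (Q * E * P).map φ - (Q * A * P).map φ := by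
      rw [hMKdef, Matrix.mul_sub, Matrix.sub_mul, Matrix.mul_smul, Matrix.smul_mul,
        hQKdef, hPKdef, ← Matrix.map_mul, ← Matrix.map_mul, ← Matrix.map_mul,
        ← Matrix.map_mul]
    rw [h1, hE', hA']
    ext i j
    simp only [Matrix.sub_apply, Matrix.smul_apply, Matrix.map_apply,
      Matrix.submatrix_apply, hSdef]
    rcases e i with i1 | i2 <;> rcases e j with j1 | j2 <;>
      simp [Matrix.fromBlocks, Matrix.one_apply, hWKdef, hNKdef, smul_eq_mul, apply_ite] <;>
      try tauto
  have hSS : S * Sinv = 1 := by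
    rw [hSdef, hSinvdef, Matrix.fromBlocks_multiply]
    simp only [Matrix.mul_zero, Matrix.zero_mul, add_zero, zero_add, hB₁inv, hB₂inv]
    exact Matrix.fromBlocks_one
  have hSS' : S.submatrix e e * Sinv.submatrix e e = 1 := by
    rw [Matrix.submatrix_mul_equiv, hSS, Matrix.submatrix_one_equiv]
  set Minv := PK * Sinv.submatrix e e * QK with hMinvdef
  have hMval : MK = QK⁻¹ * S.submatrix e e * PK⁻¹ := by
    rw [← key]
    calc MK = QK⁻¹ * QK * MK * (PK * PK⁻¹) := by
          rw [Matrix.nonsing_inv_mul _ hdQ, Matrix.mul_nonsing_inv _ hdP,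
            Matrix.one_mul, Matrix.mul_one]
      _ = QK⁻¹ * (QK * MK * PK) * PK⁻¹ := by simp only [Matrix.mul_assoc]
  have hright : MK * Minv = 1 := by
    rw [hMval, hMinvdef]
    calc QK⁻¹ * S.submatrix e e * PK⁻¹ * (PK * Sinv.submatrix e e * QK)
        = QK⁻¹ * (S.submatrix e e * ((PK⁻¹ * PK) * (Sinv.submatrix e e * QK))) := by
          simp only [Matrix.mul_assoc]
      _ = QK⁻¹ * (S.submatrix e e * (Sinv.submatrix e e * QK)) := by
          rw [Matrix.nonsing_inv_mul _ hdP, Matrix.one_mul]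
      _ = QK⁻¹ * ((S.submatrix e e * Sinv.submatrix e e) * QK) := by
          rw [Matrix.mul_assoc]
      _ = 1 := by rw [hSS', Matrix.one_mul, Matrix.nonsing_inv_mul _ hdQ]
  have hMu : IsUnit MK := by
    rw [Matrix.isUnit_iff_isUnit_det]
    exact IsUnit.of_mul_eq_one Minv.det (by rw [← Matrix.det_mul, hright, Matrix.det_one])
  refine ⟨hMu, ?_⟩
  rw [Matrix.inv_eq_right_inv hright, hMinvdef]
  -- now the computation
  set bφ : Fin n → RatFunc ℝ := fun i => φ (b i) with hbφ
  set cφ : Fin n → RatFunc ℝ := fun i => φ (c i) with hcφ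
  set βφ : Fin n → RatFunc ℝ := fun i => φ (Q.mulVec b i) with hβφ
  set γφ : Fin n → RatFunc ℝ := fun i => φ (Pᵀ.mulVec c i) with hγφ
  have hQb : QK.mulVec bφ = βφ := by
    funext i
    rw [hβφ]
    exact (RingHom.map_mulVec φ Q b i).symm
  have hPc : PKᵀ.mulVec cφ = γφ := by
    funext i
    rw [hγφ, hPKdef, ← Matrix.transpose_map]
    exact (RingHom.map_mulVec φ Pᵀ c i).symm
  have step1 : cφ ⬝ᵥ (PK * Sinv.submatrix e e * QK).mulVec bφ
      = γφ ⬝ᵥ (Sinv.submatrix e e).mulVec βφ := by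
    rw [← Matrix.mulVec_mulVec, ← Matrix.mulVec_mulVec, Matrix.dotProduct_mulVec,
      ← Matrix.mulVec_transpose, hPc, hQb]
  have hdot_e : ∀ (u : Fin n → RatFunc ℝ) (w : Fin n₁ ⊕ Fin n₂ → RatFunc ℝ),
      u ⬝ᵥ (w ∘ e) = (u ∘ e.symm) ⬝ᵥ w := by
    intro u w
    simp only [dotProduct, Function.comp_apply]
    exact Fintype.sum_equiv e _ _ (fun i => by simp)
  rw [step1, Matrix.submatrix_mulVec_equiv, hdot_e]
  have hβsplit : βφ ∘ e.symm = Sum.elim (fun i => φ (α₁ i)) (fun i => φ (α₂ i)) := by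
    funext j
    cases j with
    | inl i => simp [hα₁, part1, hβφ, he]
    | inr i => simp [hα₂, part2, hβφ, he]
  have hγsplit : γφ ∘ ⇑e.symm = Sum.elim (fun i => φ (γ₁ i)) (fun i => φ (γ₂ i)) := by
    funext j
    cases j with
    | inl i => simp [hγ₁, part1, hγφ, he]
    | inr i => simp [hγ₂, part2, hγφ, he]
  rw [hβsplit, hγsplit, hSinvdef, Matrix.fromBlocks_mulVec]
  simp only [Sum.elim_comp_inl, Sum.elim_comp_inr, Matrix.zero_mulVec, add_zero, zero_add]
  rw [sumElim_dotProduct_sumElim]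
  have hfast : (fun i => φ (γ₂ i)) ⬝ᵥ B₂.mulVec (fun i => φ (α₂ i))
      = -∑ i ∈ Finset.range ℓ, x ^ i * φ (γ₂ ⬝ᵥ (N ^ i).mulVec α₂) := by
    rw [hB₂def, Matrix.neg_mulVec, dotProduct_neg, neg_inj,
      aux_sum_mulVec, aux_dot_sum]
    refine Finset.sum_congr rfl fun i _ => ?_
    rw [Matrix.smul_mulVec, dotProduct_smul, smul_eq_mul, hNKpow]
    congr 1
    have : (fun i => φ (α₂ i)) = φ ∘ α₂ := rfl
    rw [this]
    have hmv : (N ^ i).map φ *ᵥ (φ ∘ α₂) = φ ∘ ((N ^ i) *ᵥ α₂) := by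
      funext k
      exact (RingHom.map_mulVec φ (N ^ i) α₂ k).symm
    rw [hmv]
    have : (fun k => φ (γ₂ k)) = φ ∘ γ₂ := rfl
    rw [this, ← RingHom.map_dotProduct]
  rw [hfast, sub_eq_add_neg]
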